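/- Tensor order: if f₁ = T(P,P'), f₂ = T(Q,Q'), f₃ = T(P₁,P₁') are trade-off functions of independent pairs with f₂(α) ≤ f₃(α) for all α, then (f₁ ⊗ f₂)(α) ≤ (f₁ ⊗ f₃)(α) for all α, where f ⊗ g denotes the trade-off function of the corresponding product distributions: T(P⊗Q, P'⊗Q') = T(P,P') ⊗ T(Q,Q'). -/

import Mathlib

open MeasureTheory ProbabilityTheory

/-- The trade-off function `T(P,Q)(a)`. -/
noncomputable def tradeOff {Ω : Type*} [MeasurableSpace Ω] (P Q : Measure Ω) (a : ℝ) : ℝ :=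
  sInf { b : ℝ | ∃ φ : Ω → ℝ, Measurable φ ∧ (∀ x, φ x ∈ Set.Icc (0:ℝ) 1) ∧
    (∫ x, φ x ∂P) ≤ a ∧ b = 1 - ∫ x, φ x ∂Q }

section Aux
variable {Ω : Type*} [MeasurableSpace Ω] (P Q : Measure Ω)
def tSet (a : ℝ) : Set ℝ :=
  { b : ℝ | ∃ φ : Ω → ℝ, Measurable φ ∧ (∀ x, φ x ∈ Set.Icc (0:ℝ) 1) ∧
    (∫ x, φ x ∂P) ≤ a ∧ b = 1 - ∫ x, φ x ∂Q }
lemma tradeOff_eq (a : ℝ) : tradeOff P Q a = sInf (tSet P Q a) := rfl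
variable [IsProbabilityMeasure P] [IsProbabilityMeasure Q]
lemma test_integrable {φ : Ω → ℝ} (hm : Measurable φ)
    (hb : ∀ x, φ x ∈ Set.Icc (0:ℝ) 1) : Integrable φ P := by
  refine (integrable_const (1:ℝ)).mono' hm.aestronglyMeasurable ?_
  filter_upwards with x
  rw [Real.norm_eq_abs, abs_le]
  exact ⟨by linarith [(hb x).1], (hb x).2⟩
lemma test_integral_mem {φ : Ω → ℝ} (hm : Measurable φ)
    (hb : ∀ x, φ x ∈ Set.Icc (0:ℝ) 1) : (∫ x, φ x ∂P) ∈ Set.Icc (0:ℝ) 1 := by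
  constructor
  · exact integral_nonneg fun x => (hb x).1
  · calc (∫ x, φ x ∂P) ≤ ∫ _, (1:ℝ) ∂P :=
        integral_mono (test_integrable P hm hb) (integrable_const 1) fun x => (hb x).2
    _ = 1 := by simp
lemma tSet_nonempty {a : ℝ} (ha : a ∈ Set.Icc (0:ℝ) 1) : (tSet P Q a).Nonempty := by
  refine ⟨1 - a, fun _ => a, measurable_const, fun _ => ha, by simp, by simp⟩
set_option linter.unusedSectionVars false in
lemma tSet_bddBelow (a : ℝ) : BddBelow (tSet P Q a) := by
  refine ⟨0, fun b hb => ?_⟩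
  obtain ⟨φ, hm, hIcc, _, rfl⟩ := hb
  have := (test_integral_mem Q hm hIcc).2
  linarith
lemma tradeOff_le' {φ : Ω → ℝ} (hm : Measurable φ)
    (hIcc : ∀ x, φ x ∈ Set.Icc (0:ℝ) 1) {a : ℝ} (ha : (∫ x, φ x ∂P) ≤ a) :
    tradeOff P Q a ≤ 1 - ∫ x, φ x ∂Q :=
  csInf_le (tSet_bddBelow P Q a) ⟨φ, hm, hIcc, ha, rfl⟩
lemma tradeOff_anti {a a' : ℝ} (ha : a ∈ Set.Icc (0:ℝ) 1) (h : a ≤ a') :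
    tradeOff P Q a' ≤ tradeOff P Q a := by
  refine csInf_le_csInf (tSet_bddBelow P Q a') (tSet_nonempty P Q ha) ?_
  rintro b ⟨φ, hm, hIcc, hsize, rfl⟩
  exact ⟨φ, hm, hIcc, hsize.trans h, rfl⟩
lemma exists_test {a : ℝ} (ha : a ∈ Set.Icc (0:ℝ) 1) {ε : ℝ} (hε : 0 < ε) :
    ∃ φ : Ω → ℝ, Measurable φ ∧ (∀ x, φ x ∈ Set.Icc (0:ℝ) 1) ∧
      (∫ x, φ x ∂P) ≤ a ∧ 1 - (∫ x, φ x ∂Q) ≤ tradeOff P Q a + ε := by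
  obtain ⟨b, hb, hblt⟩ := Real.lt_sInf_add_pos (tSet_nonempty P Q ha) hε
  obtain ⟨φ, hm, hIcc, hsize, rfl⟩ := hb
  exact ⟨φ, hm, hIcc, hsize, hblt.le⟩
end Aux

section Core
variable {Ω₁ Ω₂ Ω₃ : Type*}
    [MeasurableSpace Ω₁] [MeasurableSpace Ω₂] [MeasurableSpace Ω₃]
    (P P' : Measure Ω₁) (Q Q' : Measure Ω₂) (P₁ P₁' : Measure Ω₃)
    [IsProbabilityMeasure P] [IsProbabilityMeasure P']
    [IsProbabilityMeasure Q] [IsProbabilityMeasure Q']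
    [IsProbabilityMeasure P₁] [IsProbabilityMeasure P₁']

lemma core (h23 : ∀ α ∈ Set.Icc (0:ℝ) 1, tradeOff Q Q' α ≤ tradeOff P₁ P₁' α)
    {φ : Ω₁ × Ω₃ → ℝ} (hφm : Measurable φ) (hφIcc : ∀ p, φ p ∈ Set.Icc (0:ℝ) 1)
    {n : ℕ} (hn : 0 < n) {ε : ℝ} (hε : 0 < ε) :
    ∃ ψ : Ω₁ × Ω₂ → ℝ, Measurable ψ ∧ (∀ p, ψ p ∈ Set.Icc (0:ℝ) 1) ∧
      (∫ p, ψ p ∂(P.prod Q)) ≤ (∫ p, φ p ∂(P.prod P₁)) + 1 / n ∧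
      ((∫ p, φ p ∂(P.prod P₁)) ≤ 0 → (∫ p, ψ p ∂(P.prod Q)) ≤ 0) ∧
      1 - (∫ p, ψ p ∂(P'.prod Q')) ≤ (1 - ∫ p, φ p ∂(P'.prod P₁')) + ε := by
  have hn' : (0:ℝ) < n := by exact_mod_cast hn
  set g : Ω₁ → ℝ := fun x => ∫ y, φ (x, y) ∂P₁ with hg
  have hslice : ∀ x : Ω₁, Measurable fun y => φ (x, y) :=
    fun x => hφm.comp measurable_prodMk_left
  have hsliceIcc : ∀ x : Ω₁, ∀ y, φ (x, y) ∈ Set.Icc (0:ℝ) 1 := fun x y => hφIcc _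
  have hgm : Measurable g :=
    (hφm.stronglyMeasurable.integral_prod_right').measurable
  have hgIcc : ∀ x, g x ∈ Set.Icc (0:ℝ) 1 :=
    fun x => test_integral_mem P₁ (hslice x) (hsliceIcc x)
  set K : Ω₁ → ℕ := fun x => ⌈(n:ℝ) * g x⌉₊ with hK
  have hKm : Measurable K := (measurable_const.mul hgm).nat_ceil
  have hKn : ∀ x, K x ≤ n := fun x => Nat.ceil_le.2 (by
    have := (hgIcc x).2; nlinarith)
  -- levels
  have hlev : ∀ k : ℕ, ((min k n : ℕ) : ℝ) / n ∈ Set.Icc (0:ℝ) 1 := by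
    intro k
    constructor
    · positivity
    · rw [div_le_one hn']
      exact_mod_cast Nat.cast_le.2 (min_le_right k n)
  choose ψ' hψm hψIcc hψsize hψpow using fun k : ℕ => exists_test Q Q' (hlev k) hε
  set ψ : Ω₁ × Ω₂ → ℝ := fun p => ψ' (K p.1) p.2 with hψ
  have hψmeas : Measurable ψ := by
    have h1 : Measurable fun q : Ω₂ × ℕ => ψ' q.2 q.1 :=
      measurable_from_prod_countable_left fun k => hψm k
    exact h1.comp (measurable_snd.prodMk (hKm.comp measurable_fst))
  have hψIcc' : ∀ p, ψ p ∈ Set.Icc (0:ℝ) 1 := fun p => hψIcc _ _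
  -- the inner integrals as functions of x
  have hFm : Measurable fun x => ∫ y, ψ (x, y) ∂Q :=
    (hψmeas.stronglyMeasurable.integral_prod_right').measurable
  have hFIcc : ∀ x, (∫ y, ψ (x, y) ∂Q) ∈ Set.Icc (0:ℝ) 1 := fun x =>
    test_integral_mem Q (hψmeas.comp measurable_prodMk_left) (fun y => hψIcc' (x, y))
  have hF'm : Measurable fun x => ∫ y, ψ (x, y) ∂Q' :=
    (hψmeas.stronglyMeasurable.integral_prod_right').measurable
  have hF'Icc : ∀ x, (∫ y, ψ (x, y) ∂Q') ∈ Set.Icc (0:ℝ) 1 := fun x =>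
    test_integral_mem Q' (hψmeas.comp measurable_prodMk_left) (fun y => hψIcc' (x, y))
  have hlevK : ∀ x, ((min (K x) n : ℕ) : ℝ) / n = (K x : ℝ) / n := by
    intro x; rw [min_eq_left (hKn x)]
  have hgleK : ∀ x, g x ≤ (K x : ℝ) / n := by
    intro x
    rw [le_div_iff₀ hn', mul_comm]
    exact Nat.le_ceil _
  have hKint : Integrable (fun x => (K x : ℝ) / n) P := by
    refine test_integrable P (measurable_from_top.comp hKm |>.div measurable_const) ?_
    intro x
    rw [← hlevK x]
    exact hlev (K x)
  have hgint : Integrable g P := test_integrable P hgm hgIcc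
  have hGP : (∫ p, φ p ∂(P.prod P₁)) = ∫ x, g x ∂P :=
    integral_prod _ (test_integrable (P.prod P₁) hφm hφIcc)
  have sizeA : (∫ p, ψ p ∂(P.prod Q)) ≤ ∫ x, (K x : ℝ) / n ∂P := by
    rw [integral_prod _ (test_integrable (P.prod Q) hψmeas hψIcc')]
    refine integral_mono (test_integrable P hFm hFIcc) hKint ?_
    intro x
    have := hψsize (K x)
    rw [hlevK x] at this
    exact this
  refine ⟨ψ, hψmeas, hψIcc', ?_, ?_, ?_⟩
  · -- size bound
    refine sizeA.trans ?_
    have hKle : ∀ x, (K x : ℝ) / n ≤ g x + 1 / n := by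
      intro x
      rw [div_le_iff₀ hn']
      have h1 : (K x : ℝ) < (n : ℝ) * g x + 1 :=
        Nat.ceil_lt_add_one (by nlinarith [(hgIcc x).1])
      have h2 : (g x + 1 / n) * n = n * g x + 1 := by field_simp
      linarith
    calc (∫ x, (K x : ℝ) / n ∂P) ≤ ∫ x, (g x + 1 / n) ∂P :=
          integral_mono hKint (hgint.add (integrable_const _)) hKle
      _ = (∫ x, g x ∂P) + 1 / n := by
          rw [integral_add hgint (integrable_const _)]; simp
      _ = (∫ p, φ p ∂(P.prod P₁)) + 1 / n := by rw [hGP]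
  · -- zero-size case
    intro h0
    refine sizeA.trans ?_
    have hg0 : g =ᵐ[P] 0 := by
      refine (integral_eq_zero_iff_of_nonneg (fun x => (hgIcc x).1) hgint).1 ?_
      refine le_antisymm ?_ (integral_nonneg fun x => (hgIcc x).1)
      rw [← hGP]; exact h0
    have hK0 : (fun x => (K x : ℝ) / n) =ᵐ[P] 0 := by
      filter_upwards [hg0] with x hx
      have : g x = 0 := hx
      simp [hK, this]
    rw [integral_congr_ae hK0]; simp
  · -- power bound
    rw [integral_prod _ (test_integrable (P'.prod Q') hψmeas hψIcc')]
    have key : ∀ x, 1 - (∫ y, ψ (x, y) ∂Q') ≤ (1 - ∫ y, φ (x, y) ∂P₁') + ε := by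
      intro x
      have h1 : 1 - (∫ y, ψ (x, y) ∂Q') ≤ tradeOff Q Q' ((K x : ℝ) / n) + ε := by
        have := hψpow (K x); rw [hlevK x] at this; exact this
      have hKIcc : ((K x : ℝ) / n) ∈ Set.Icc (0:ℝ) 1 := by rw [← hlevK x]; exact hlev _
      have h2 : tradeOff Q Q' ((K x : ℝ) / n) ≤ tradeOff P₁ P₁' ((K x : ℝ) / n) :=
        h23 _ hKIcc
      have h3 : tradeOff P₁ P₁' ((K x : ℝ) / n) ≤ tradeOff P₁ P₁' (g x) :=
        tradeOff_anti P₁ P₁' (hgIcc x) (hgleK x)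
      have h4 : tradeOff P₁ P₁' (g x) ≤ 1 - ∫ y, φ (x, y) ∂P₁' :=
        tradeOff_le' P₁ P₁' (hslice x) (hsliceIcc x) le_rfl
      linarith
    have hGm : Measurable fun x => ∫ y, φ (x, y) ∂P₁' :=
      (hφm.stronglyMeasurable.integral_prod_right').measurable
    have hGIcc : ∀ x, (∫ y, φ (x, y) ∂P₁') ∈ Set.Icc (0:ℝ) 1 :=
      fun x => test_integral_mem P₁' (hslice x) (hsliceIcc x)
    have hint1 : Integrable (fun x => ∫ y, ψ (x, y) ∂Q') P' :=
      test_integrable P' hF'm hF'Icc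
    have hint2 : Integrable (fun x => ∫ y, φ (x, y) ∂P₁') P' :=
      test_integrable P' hGm hGIcc
    have hi1 : Integrable (fun x => 1 - ∫ y, ψ (x, y) ∂Q') P' :=
      (integrable_const 1).sub hint1
    have hi2 : Integrable (fun x => 1 - ∫ y, φ (x, y) ∂P₁') P' :=
      (integrable_const 1).sub hint2
    have hmono : (∫ x, (1 - ∫ y, ψ (x, y) ∂Q') ∂P')
        ≤ ∫ x, ((1 - ∫ y, φ (x, y) ∂P₁') + ε) ∂P' :=
      integral_mono (hi1)
        ((hi2).add (integrable_const ε)) key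
    have hL : (∫ x, (1 - ∫ y, ψ (x, y) ∂Q') ∂P')
        = 1 - ∫ x, ∫ y, ψ (x, y) ∂Q' ∂P' := by
      rw [integral_sub (integrable_const 1) hint1]; simp
    have hR : (∫ x, ((1 - ∫ y, φ (x, y) ∂P₁') + ε) ∂P')
        = (1 - ∫ x, ∫ y, φ (x, y) ∂P₁' ∂P') + ε := by
      rw [integral_add (hi2) (integrable_const ε),
        integral_sub (integrable_const 1) hint2]
      simp
    rw [hL, hR] at hmono
    have hphiprod : (∫ p, φ p ∂(P'.prod P₁')) = ∫ x, ∫ y, φ (x, y) ∂P₁' ∂P' :=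
      integral_prod _ (test_integrable (P'.prod P₁') hφm hφIcc)
    rw [hphiprod]
    linarith
end Core

/-- tensor order: if `f₂ = T(Q,Q') ≤ f₃ = T(P₁,P₁')` pointwise,
then `f₁ ⊗ f₂ ≤ f₁ ⊗ f₃` pointwise, where the tensor of trade-off functions is
realized by the trade-off function of the corresponding product distributions:
`T(P⊗Q, P'⊗Q') = T(P,P') ⊗ T(Q,Q')`. -/
theorem stmt_8 {Ω₁ Ω₂ Ω₃ : Type*}
    [MeasurableSpace Ω₁] [MeasurableSpace Ω₂] [MeasurableSpace Ω₃]
    (P P' : Measure Ω₁) (Q Q' : Measure Ω₂) (P₁ P₁' : Measure Ω₃)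
    [IsProbabilityMeasure P] [IsProbabilityMeasure P']
    [IsProbabilityMeasure Q] [IsProbabilityMeasure Q']
    [IsProbabilityMeasure P₁] [IsProbabilityMeasure P₁']
    (h23 : ∀ α ∈ Set.Icc (0:ℝ) 1, tradeOff Q Q' α ≤ tradeOff P₁ P₁' α) :
    ∀ α ∈ Set.Icc (0:ℝ) 1,
      tradeOff (P.prod Q) (P'.prod Q') α ≤ tradeOff (P.prod P₁) (P'.prod P₁') α := by
  intro α hα
  rw [tradeOff_eq (P.prod P₁) (P'.prod P₁') α]
  refine le_csInf (tSet_nonempty _ _ hα) ?_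
  rintro b ⟨φ, hφm, hφIcc, hφsize, rfl⟩
  have hbmem := test_integral_mem (P'.prod P₁') hφm hφIcc
  refine le_of_forall_pos_le_add ?_
  intro ε hε
  rcases eq_or_lt_of_le hα.1 with hα0 | hα0
  · -- α = 0
    obtain ⟨ψ, hψm, hψIcc, _, hψ0, hψpow⟩ :=
      core P P' Q Q' P₁ P₁' h23 hφm hφIcc (n := 1) Nat.one_pos hε
    have hψsize : (∫ p, ψ p ∂(P.prod Q)) ≤ α := by
      rw [← hα0]
      exact hψ0 (by rw [← hα0] at hφsize; exact hφsize)
    calc tradeOff (P.prod Q) (P'.prod Q') α ≤ 1 - ∫ p, ψ p ∂(P'.prod Q') :=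
          tradeOff_le' _ _ hψm hψIcc hψsize
      _ ≤ (1 - ∫ p, φ p ∂(P'.prod P₁')) + ε := hψpow
  · -- α > 0
    obtain ⟨n, hngt⟩ := exists_nat_gt (2 / (ε * α))
    have hn2 : (0:ℝ) < 2 / (ε * α) := by positivity
    have hn' : (0:ℝ) < n := lt_trans hn2 hngt
    have hn : 0 < n := by exact_mod_cast hn'
    have hinv : 1 / (n:ℝ) < ε * α / 2 := by
      rw [div_lt_iff₀ hn']
      rw [div_lt_iff₀ (by positivity : (0:ℝ) < ε * α)] at hngt
      nlinarith
    obtain ⟨ψ, hψm, hψIcc, hψsize, _, hψpow⟩ :=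
      core P P' Q Q' P₁ P₁' h23 hφm hφIcc hn (half_pos hε)
    set s : ℝ := α / (α + 1 / n) with hs
    have hden : (0:ℝ) < α + 1 / n := by positivity
    have hs0 : 0 ≤ s := by positivity
    have hs1 : s ≤ 1 := by
      rw [hs, div_le_one hden]
      have : (0:ℝ) ≤ 1 / n := by positivity
      linarith
    set ψ₂ : Ω₁ × Ω₂ → ℝ := fun p => s * ψ p with hψ₂
    have hψ₂m : Measurable ψ₂ := measurable_const.mul hψm
    have hψ₂Icc : ∀ p, ψ₂ p ∈ Set.Icc (0:ℝ) 1 := by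
      intro p
      constructor
      · exact mul_nonneg hs0 (hψIcc p).1
      · show s * ψ p ≤ 1
        nlinarith [(hψIcc p).1, (hψIcc p).2]
    have hInt2 : (∫ p, ψ₂ p ∂(P.prod Q)) = s * ∫ p, ψ p ∂(P.prod Q) :=
      integral_const_mul s ψ
    have hInt2' : (∫ p, ψ₂ p ∂(P'.prod Q')) = s * ∫ p, ψ p ∂(P'.prod Q') :=
      integral_const_mul s ψ
    have hψ₂size : (∫ p, ψ₂ p ∂(P.prod Q)) ≤ α := by
      rw [hInt2]
      have h1 : (∫ p, ψ p ∂(P.prod Q)) ≤ α + 1 / n :=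
        hψsize.trans (by linarith)
      have h2 : s * (α + 1 / n) = α := div_mul_cancel₀ α (ne_of_gt hden)
      nlinarith [(test_integral_mem (P.prod Q) hψm hψIcc).1]
    have hψ₂pow : 1 - (∫ p, ψ₂ p ∂(P'.prod Q')) ≤ (1 - ∫ p, φ p ∂(P'.prod P₁')) + ε := by
      rw [hInt2']
      set I := ∫ p, ψ p ∂(P'.prod Q') with hI
      have hIle : I ≤ 1 := (test_integral_mem (P'.prod Q') hψm hψIcc).2
      have hb0 : 0 ≤ 1 - ∫ p, φ p ∂(P'.prod P₁') := by linarith [hbmem.2]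
      have h1s : 1 - s ≤ ε / 2 := by
        rw [hs]
        rw [div_le_iff₀ hden] at *
        have : (1 - α / (α + 1/n)) * (α + 1/n) = 1/n := by field_simp; ring
        nlinarith
      -- 1 - s*I = (1-s) + s*(1-I) ≤ ε/2 + (b' + ε/2)
      have hdecomp : 1 - s * I = (1 - s) + s * (1 - I) := by ring
      have hstep : s * (1 - I) ≤ (1 - ∫ p, φ p ∂(P'.prod P₁')) + ε / 2 := by
        have h1 : s * (1 - I) ≤ 1 * (1 - I) :=
          mul_le_mul_of_nonneg_right hs1 (by linarith)
        calc s * (1 - I) ≤ 1 - I := by linarith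
          _ ≤ (1 - ∫ p, φ p ∂(P'.prod P₁')) + ε / 2 := hψpow
      linarith
    calc tradeOff (P.prod Q) (P'.prod Q') α ≤ 1 - ∫ p, ψ₂ p ∂(P'.prod Q') :=
          tradeOff_le' _ _ hψ₂m hψ₂Icc hψ₂size
      _ ≤ (1 - ∫ p, φ p ∂(P'.prod P₁')) + ε := hψ₂pow
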